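/- Given an unsigned graph G = (V, E), construct the signed graph G' by: keeping V with all edges of E as positive edges, and for each v ∈ V attaching d'(v) = ⌈(deg(v)+1)/2⌉ disjoint negative 4-cliques, connecting one vertex of each such clique to v by a negative edge. Then a set A ⊆ V is a defensive alliance of G if and only if A is a defensive alliance of G'. -/

import Mathlib

open Set

variable {V : Type*}

/-- Number of `G`-neighbors of `v` inside the set `S`. -/
noncomputable def ndegOn (G : SimpleGraph V) (S : Set V) (v : V) : ℕ := (S ∩ {u | G.Adj v u}).ncard

/-- Total number of `G`-neighbors of `v`. -/
noncomputable def ndeg (G : SimpleGraph V) (v : V) : ℕ := {u | G.Adj v u}.ncard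

/-- `S` is a defensive alliance in the signed graph `(V, Gp, Gn)`. -/
def IsDefAlliance (Gp Gn : SimpleGraph V) (S : Set V) : Prop :=
  S.Nonempty ∧ ∀ v ∈ S,
    ndegOn Gn S v ≤ ndegOn Gp S v + 1 ∧ ndegOn Gn Sᶜ v ≤ ndegOn Gp S v + 1

/-- Defensive alliance number: minimum size of a defensive alliance. -/
noncomputable def asd (Gp Gn : SimpleGraph V) : ℕ :=
  sInf {n | ∃ S : Set V, IsDefAlliance Gp Gn S ∧ S.ncard = n}

/-- Defensive alliance in an unsigned graph. -/
def IsDefAllianceU (G : SimpleGraph V) (A : Set V) : Prop :=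
  A.Nonempty ∧ ∀ v ∈ A, ndegOn G Aᶜ v ≤ ndegOn G A v + 1

/-- d'(v) = ⌈(deg(v)+1)/2⌉. -/
noncomputable def dprime (G : SimpleGraph V) (v : V) : ℕ := (ndeg G v + 2) / 2

/-- Vertex set of the constructed signed graph: original vertices plus, for each
vertex v, d'(v) disjoint 4-cliques. -/
def Vext (G : SimpleGraph V) : Type _ := V ⊕ (Σ v : V, Fin (dprime G v) × Fin 4)

/-- Positive edges of the construction: precisely the original edges of G. -/
def Gpos (G : SimpleGraph V) : SimpleGraph (Vext G) :=
  SimpleGraph.fromRel (fun a b =>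
    ∃ u w : V, a = Sum.inl u ∧ b = Sum.inl w ∧ G.Adj u w)

/-- Negative edges of the construction: all edges inside each attached 4-clique,
plus an edge from vertex v to one designated vertex of each of its cliques. -/
def Gneg (G : SimpleGraph V) : SimpleGraph (Vext G) :=
  SimpleGraph.fromRel (fun a b =>
    (∃ (u : V) (i : Fin (dprime G u)),
        a = Sum.inl u ∧ b = Sum.inr ⟨u, i, 0⟩) ∨
    (∃ (u : V) (i : Fin (dprime G u)) (j k : Fin 4),
        a = Sum.inr ⟨u, i, j⟩ ∧ b = Sum.inr ⟨u, i, k⟩))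

lemma gpos_adj (G : SimpleGraph V) (u : V) (x : Vext G) :
    (Gpos G).Adj (Sum.inl u) x ↔ ∃ w, x = Sum.inl w ∧ G.Adj u w := by
  constructor
  · rintro ⟨hne, (⟨a, b, ha, hb, hab⟩ | ⟨a, b, ha, hb, hab⟩)⟩
    · exact ⟨b, hb, (Sum.inl.inj ha) ▸ hab⟩
    · exact ⟨a, ha, ((Sum.inl.inj hb) ▸ hab).symm⟩
  · rintro ⟨w, rfl, h⟩
    exact ⟨fun he => h.ne (Sum.inl.inj he), Or.inl ⟨u, w, rfl, rfl, h⟩⟩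

lemma gneg_adj (G : SimpleGraph V) (u : V) (x : Vext G) :
    (Gneg G).Adj (Sum.inl u) x ↔ ∃ i : Fin (dprime G u), x = Sum.inr ⟨u, i, 0⟩ := by
  constructor
  · rintro ⟨hne, (h | h)⟩
    · rcases h with (⟨a, i, ha, hb⟩ | ⟨a, i, j, k, ha, hb⟩)
      · exact ⟨(Sum.inl.inj ha) ▸ i, by rw [hb]; cases Sum.inl.inj ha; rfl⟩
      · exact absurd ha (by simp)
    · rcases h with (⟨a, i, ha, hb⟩ | ⟨a, i, j, k, ha, hb⟩)
      · exact absurd hb (by simp)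
      · exact absurd hb (by simp)
  · rintro ⟨i, rfl⟩
    exact ⟨Sum.inl_ne_inr, Or.inl (Or.inl ⟨u, i, rfl, rfl⟩)⟩

lemma pos_on (G : SimpleGraph V) (A : Set V) (u : V) :
    ndegOn (Gpos G) (Sum.inl '' A) (Sum.inl u) = ndegOn G A u := by
  unfold ndegOn
  rw [← Set.ncard_image_of_injective (A ∩ {w | G.Adj u w})
      (Sum.inl_injective : Function.Injective (Sum.inl : V → Vext G))]
  congr 1
  ext x
  simp only [Set.mem_inter_iff, Set.mem_image, Set.mem_setOf_eq, gpos_adj]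
  constructor
  · rintro ⟨⟨w, hw, rfl⟩, ⟨w', hw', h⟩⟩
    exact ⟨w, ⟨hw, (Sum.inl.inj hw').symm ▸ h⟩, rfl⟩
  · rintro ⟨w, ⟨hw, h⟩, rfl⟩
    exact ⟨⟨w, hw, rfl⟩, ⟨w, rfl, h⟩⟩

lemma neg_on (G : SimpleGraph V) (A : Set V) (u : V) :
    ndegOn (Gneg G) (Sum.inl '' A) (Sum.inl u) = 0 := by
  unfold ndegOn
  rw [← Set.ncard_empty (Vext G)]
  congr 1
  ext x
  simp only [Set.mem_inter_iff, Set.mem_setOf_eq, Set.mem_empty_iff_false, iff_false, not_and,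
    gneg_adj]
  rintro ⟨w, hw, rfl⟩ ⟨i, h⟩
  simp at h

lemma neg_off (G : SimpleGraph V) (A : Set V) (u : V) :
    ndegOn (Gneg G) (Sum.inl '' A)ᶜ (Sum.inl u) = dprime G u := by
  unfold ndegOn
  have hr : (Set.range (fun i : Fin (dprime G u) => (Sum.inr ⟨u, i, 0⟩ : Vext G))).ncard
      = dprime G u := by
    rw [← Set.image_univ, Set.ncard_image_of_injective _ (fun a b h => by
      simpa using h), Set.ncard_univ, Nat.card_eq_fintype_card, Fintype.card_fin]
  rw [← hr]
  congr 1
  ext x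
  simp only [Set.mem_inter_iff, Set.mem_compl_iff, Set.mem_setOf_eq, Set.mem_range, gneg_adj,
    Set.mem_image]
  constructor
  · rintro ⟨-, i, rfl⟩
    exact ⟨i, rfl⟩
  · rintro ⟨i, rfl⟩
    exact ⟨by rintro ⟨w, -, h⟩; simp at h, ⟨i, rfl⟩⟩

lemma split [Fintype V] (G : SimpleGraph V) (A : Set V) (u : V) :
    ndegOn G A u + ndegOn G Aᶜ u = ndeg G u := by
  classical
  unfold ndegOn ndeg
  have h1 : A ∩ {u' | G.Adj u u'} = {u' | G.Adj u u'} ∩ A := Set.inter_comm _ _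
  have h2 : Aᶜ ∩ {u' | G.Adj u u'} = {u' | G.Adj u u'} \ A := by
    ext x; simp [Set.mem_diff, and_comm]
  rw [h1, h2]
  exact Set.ncard_inter_add_ncard_diff_eq_ncard _ _ (Set.toFinite _)

theorem stmt18 [Fintype V] (G : SimpleGraph V) (A : Set V) :
    IsDefAllianceU G A ↔
      IsDefAlliance (Gpos G) (Gneg G) (Sum.inl '' A) := by
  constructor
  · rintro ⟨hne, h⟩
    refine ⟨hne.image _, ?_⟩
    rintro v ⟨u, hu, rfl⟩
    rw [pos_on, neg_on, neg_off]
    have h1 := h u hu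
    have h2 := split G A u
    have hd : dprime G u = (ndeg G u + 2) / 2 := rfl
    exact ⟨by omega, by omega⟩
  · rintro ⟨hne, h⟩
    refine ⟨?_, ?_⟩
    · obtain ⟨x, u, hu, -⟩ := hne
      exact ⟨u, hu⟩
    · intro u hu
      have h1 := (h (Sum.inl u) ⟨u, hu, rfl⟩).2
      rw [pos_on, neg_off] at h1
      have h2 := split G A u
      have hd : dprime G u = (ndeg G u + 2) / 2 := rfl
      omega
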